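/- For any graph G (not necessarily connected), the signless Laplacian spectral radius satisfies γ(G) ≤ max over vertices v of (d(v) + m(v)). -/

import Mathlib

open scoped Classical

/-- For any graph G, the signless Laplacian spectral radius satisfies
γ(G) ≤ max_v (d(v) + m(v)), where m(v) is the average degree of the neighbours of v. -/
theorem signless_laplacian_radius_le_max {V : Type*} [Fintype V] (G : SimpleGraph V) (γ : ℝ)
    (hγ : IsGreatest {x : ℝ | ∃ f : V → ℝ, f ≠ 0 ∧
      (Matrix.diagonal (fun v => (G.degree v : ℝ)) + G.adjMatrix ℝ).mulVec f = x • f} γ) :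
    ∃ v : V, γ ≤ (G.degree v : ℝ) +
      (if G.degree v = 0 then 0
       else (∑ u ∈ G.neighborFinset v, (G.degree u : ℝ)) / (G.degree v : ℝ)) := by
  obtain ⟨f, hf0, hf⟩ := hγ.1
  -- entrywise eigen-equation
  have heq : ∀ v : V, γ * f v = (G.degree v : ℝ) * f v + ∑ u ∈ G.neighborFinset v, f u := by
    intro v
    have := congrFun hf v
    simpa [Matrix.add_mulVec, Matrix.mulVec_diagonal, mul_comm] using this.symm
  -- nonempty V
  obtain ⟨w, hw⟩ : ∃ w, f w ≠ 0 := Function.ne_iff.mp hf0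
  by_cases hγpos : γ ≤ 0
  · refine ⟨w, le_trans hγpos ?_⟩
    have h1 : (0:ℝ) ≤ (G.degree w : ℝ) := Nat.cast_nonneg _
    have h2 : (0:ℝ) ≤ (if G.degree w = 0 then 0
       else (∑ u ∈ G.neighborFinset w, (G.degree u : ℝ)) / (G.degree w : ℝ)) := by
      split
      · exact le_refl 0
      · exact div_nonneg (Finset.sum_nonneg fun u _ => Nat.cast_nonneg _) (Nat.cast_nonneg _)
    linarith
  push_neg at hγpos
  -- degree-0 vertices have f = 0
  have hzero : ∀ v : V, G.degree v = 0 → f v = 0 := by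
    intro v hv
    have hempty : G.neighborFinset v = ∅ := Finset.card_eq_zero.mp hv
    have := heq v
    rw [hv, hempty] at this
    simp at this
    rcases this with h | h
    · exact absurd h (ne_of_gt hγpos)
    · exact h
  -- maximizing vertex for |f v| / d v
  set g : V → ℝ := fun v => |f v| / (G.degree v : ℝ) with hg
  obtain ⟨v, -, hvmax⟩ := Finset.exists_max_image Finset.univ g ⟨w, Finset.mem_univ w⟩
  have hvmax' : ∀ u, g u ≤ g v := fun u => hvmax u (Finset.mem_univ u)
  have hdw : G.degree w ≠ 0 := fun h => hw (hzero w h)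
  have hMpos : 0 < g v := by
    refine lt_of_lt_of_le ?_ (hvmax' w)
    exact div_pos (abs_pos.mpr hw) (by positivity)
  have hdv : G.degree v ≠ 0 := by
    intro h
    rw [hg] at hMpos
    simp only [h] at hMpos
    norm_num at hMpos
  have hdvpos : (0:ℝ) < (G.degree v : ℝ) := by positivity
  have hfv : |f v| = g v * (G.degree v : ℝ) := by
    simp only [hg]
    rw [div_mul_cancel₀ _ hdvpos.ne']
  -- bound neighbors
  have hnb : ∀ u ∈ G.neighborFinset v, |f u| ≤ (G.degree u : ℝ) * g v := by
    intro u hu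
    have hdu : 0 < G.degree u := by
      rw [SimpleGraph.mem_neighborFinset] at hu
      exact G.degree_pos_iff_exists_adj u |>.mpr ⟨v, hu.symm⟩
    have hdu' : (0:ℝ) < (G.degree u : ℝ) := by positivity
    have := hvmax' u
    rw [hg] at this
    calc |f u| = |f u| / (G.degree u : ℝ) * (G.degree u : ℝ) := by field_simp
    _ ≤ g v * (G.degree u : ℝ) := by
        apply mul_le_mul_of_nonneg_right this hdu'.le
    _ = (G.degree u : ℝ) * g v := mul_comm _ _
  -- key inequality
  have key : γ * (g v * (G.degree v : ℝ)) ≤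
      (G.degree v : ℝ) * (g v * (G.degree v : ℝ)) +
        (∑ u ∈ G.neighborFinset v, (G.degree u : ℝ)) * g v := by
    have h1 : γ * |f v| = |γ * f v| := by
      rw [abs_mul, abs_of_pos hγpos]
    calc γ * (g v * (G.degree v : ℝ)) = |γ * f v| := by rw [← hfv, h1]
    _ = |(G.degree v : ℝ) * f v + ∑ u ∈ G.neighborFinset v, f u| := by rw [heq v]
    _ ≤ |(G.degree v : ℝ) * f v| + |∑ u ∈ G.neighborFinset v, f u| := abs_add_le _ _
    _ ≤ (G.degree v : ℝ) * |f v| + ∑ u ∈ G.neighborFinset v, |f u| := by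
        gcongr
        · rw [abs_mul, abs_of_nonneg (Nat.cast_nonneg _)]
        · exact Finset.abs_sum_le_sum_abs _ _
    _ ≤ (G.degree v : ℝ) * (g v * (G.degree v : ℝ)) +
          ∑ u ∈ G.neighborFinset v, (G.degree u : ℝ) * g v := by
        rw [hfv]
        gcongr with u hu
        exact hnb u hu
    _ = _ := by rw [← Finset.sum_mul]
  refine ⟨v, ?_⟩
  rw [if_neg hdv]
  have hpos : 0 < g v * (G.degree v : ℝ) := mul_pos hMpos hdvpos
  rw [← mul_le_mul_iff_of_pos_right hpos]
  have hrw : ((G.degree v : ℝ) + (∑ u ∈ G.neighborFinset v, (G.degree u : ℝ)) / (G.degree v : ℝ))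
      * (g v * (G.degree v : ℝ)) =
      (G.degree v : ℝ) * (g v * (G.degree v : ℝ)) +
        (∑ u ∈ G.neighborFinset v, (G.degree u : ℝ)) * g v := by
    field_simp
  rw [hrw]
  exact key
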